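/- Let ξ be a random variable with the Binomial(n,p) distribution, where n is a positive integer and p ∈ (0,1), and let r be an integer with 0 ≤ r ≤ n. Then the conditional distribution of ξ − r given the event {ξ ≥ r} is stochastically dominated by the Binomial(n,p) distribution; that is, for every integer k ≥ 0, P(ξ − r ≥ k | ξ ≥ r) ≤ P(X ≥ k), where X is a Binomial(n,p) random variable. -/

import Mathlib

open MeasureTheory ProbabilityTheory
open scoped ENNReal

/-- The Binomial(n,p) distribution, as a measure on `ℕ`. -/
noncomputable def binomialMeasure (n : ℕ) (p : ℝ) : Measure ℕ :=
  Measure.sum fun k : ℕ =>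
    (ENNReal.ofReal ((n.choose k : ℝ) * p ^ k * (1 - p) ^ (n - k))) • Measure.dirac k

/-- The random walk `S_t = 1 + ∑_{i=1}^t (ξ_i - 1)`. -/
def walk {Ω : Type*} (ξ : ℕ → Ω → ℕ) (t : ℕ) (ω : Ω) : ℤ :=
  1 + ∑ i ∈ Finset.Icc 1 t, ((ξ i ω : ℤ) - 1)

/-- The stopping time `γ = min {t ≥ 1 : S_t ≥ H or S_t = 0}`. -/
noncomputable def hitTime {Ω : Type*} (ξ : ℕ → Ω → ℕ) (H : ℕ) (ω : Ω) : ℕ :=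
  sInf {t | 1 ≤ t ∧ ((H : ℤ) ≤ walk ξ t ω ∨ walk ξ t ω = 0)}

noncomputable def binPMF (p : ℝ) (n j : ℕ) : ℝ :=
  (n.choose j : ℝ) * p ^ j * (1 - p) ^ (n - j)

noncomputable def binTail (p : ℝ) (n m : ℕ) : ℝ :=
  ∑ j ∈ Finset.Icc m n, binPMF p n j

variable {p : ℝ}

lemma binPMF_nonneg (hp0 : 0 ≤ p) (hp1 : p ≤ 1) (n j : ℕ) : 0 ≤ binPMF p n j := by
  unfold binPMF
  have : (0:ℝ) ≤ 1 - p := by linarith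
  positivity

lemma binPMF_eq_zero {n j : ℕ} (h : n < j) : binPMF p n j = 0 := by
  simp [binPMF, Nat.choose_eq_zero_of_lt h]

lemma binPMF_succ_succ (n j : ℕ) :
    binPMF p (n+1) (j+1) = p * binPMF p n j + (1 - p) * binPMF p n (j+1) := by
  rcases lt_trichotomy j n with h | h | h
  · have h1 : (n+1) - (j+1) = (n - (j+1)) + 1 := by omega
    unfold binPMF
    rw [h1]
    push_cast [Nat.choose_succ_succ]
    have h2 : n - j = (n - (j+1)) + 1 := by omega
    rw [h2]
    ring
  · subst h
    simp [binPMF, Nat.choose_succ_self, Nat.choose_self]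
    ring
  · rw [binPMF_eq_zero (by omega), binPMF_eq_zero h, binPMF_eq_zero (by omega)]
    ring

lemma binTail_nonneg (hp0 : 0 ≤ p) (hp1 : p ≤ 1) (n m : ℕ) : 0 ≤ binTail p n m :=
  Finset.sum_nonneg fun j _ => binPMF_nonneg hp0 hp1 n j

lemma binTail_succ_succ (n m : ℕ) :
    binTail p (n+1) (m+1) = p * binTail p n m + (1 - p) * binTail p n (m+1) := by
  unfold binTail
  have himg : Finset.Icc (m+1) (n+1) = Finset.image (· + 1) (Finset.Icc m n) := by
    ext j; simp [Finset.mem_image]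
  rw [himg, Finset.sum_image (by intro a _ b _ h; simp only at h; omega)]
  have : ∑ j ∈ Finset.Icc m n, binPMF p (n+1) (j+1)
      = ∑ j ∈ Finset.Icc m n, (p * binPMF p n j + (1-p) * binPMF p n (j+1)) := by
    refine Finset.sum_congr rfl fun j _ => binPMF_succ_succ n j
  rw [this, Finset.sum_add_distrib, ← Finset.mul_sum, ← Finset.mul_sum]
  congr 1
  congr 1
  rw [show (∑ j ∈ Finset.Icc m n, binPMF p n (j+1))
      = ∑ j ∈ Finset.image (· + 1) (Finset.Icc m n), binPMF p n j from
    (Finset.sum_image (by intro a _ b _ h; simp only at h; omega)).symm, ← himg]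
  refine (Finset.sum_subset (Finset.Icc_subset_Icc_right (by omega)) ?_).symm
  intro j hj hj'
  simp only [Finset.mem_Icc] at hj hj'
  exact binPMF_eq_zero (by omega)

lemma binTail_zero (hp0 : 0 ≤ p) (n : ℕ) : binTail p n 0 = 1 := by
  have hIcc : Finset.Icc 0 n = Finset.range (n+1) := by ext j; simp
  unfold binTail binPMF
  rw [hIcc]
  calc (∑ j ∈ Finset.range (n+1), (n.choose j : ℝ) * p ^ j * (1 - p) ^ (n - j))
      = (p + (1 - p)) ^ n := by
        rw [add_pow]; exact Finset.sum_congr rfl fun j _ => by ring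
    _ = 1 := by norm_num

lemma binTail_anti (hp0 : 0 ≤ p) (hp1 : p ≤ 1) (n m : ℕ) :
    binTail p n (m+1) ≤ binTail p n m := by
  exact Finset.sum_le_sum_of_subset_of_nonneg
    (Finset.Icc_subset_Icc_left (by omega))
    (fun j _ _ => binPMF_nonneg hp0 hp1 n j)

lemma binTail_mono_n (hp0 : 0 ≤ p) (hp1 : p ≤ 1) (n k : ℕ) :
    binTail p n k ≤ binTail p (n+1) k := by
  cases k with
  | zero => rw [binTail_zero hp0, binTail_zero hp0]
  | succ m =>
    rw [binTail_succ_succ]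
    have h := binTail_anti hp0 hp1 n m
    nlinarith [binTail_nonneg hp0 hp1 n (m+1)]

lemma binTail_submul (hp0 : 0 ≤ p) (hp1 : p ≤ 1) (n r k : ℕ) :
    binTail p n (r + k) ≤ binTail p n r * binTail p n k := by
  induction n generalizing r k with
  | zero =>
    cases r with
    | zero => rw [binTail_zero hp0, zero_add, one_mul]
    | succ r' =>
      have : binTail p 0 (r' + 1 + k) = 0 := by
        unfold binTail; rw [Finset.Icc_eq_empty (by omega)]; simp
      rw [this]
      exact mul_nonneg (binTail_nonneg hp0 hp1 _ _) (binTail_nonneg hp0 hp1 _ _)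
  | succ n ih =>
    cases r with
    | zero => rw [binTail_zero hp0, zero_add, one_mul]
    | succ r' =>
      have e : r' + 1 + k = (r' + k) + 1 := by omega
      rw [e, binTail_succ_succ, binTail_succ_succ]
      have ihA := ih r' k
      have ihB := ih (r' + 1) k
      have e2 : r' + 1 + k = r' + k + 1 := by omega
      rw [e2] at ihB
      have hk := binTail_mono_n hp0 hp1 n k
      have h1 : 0 ≤ binTail p n r' := binTail_nonneg hp0 hp1 _ _
      have h2 : 0 ≤ binTail p n (r'+1) := binTail_nonneg hp0 hp1 _ _
      have h3 : 0 ≤ binTail p n k := binTail_nonneg hp0 hp1 _ _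
      have hq : 0 ≤ 1 - p := by linarith
      calc p * binTail p n (r' + k) + (1 - p) * binTail p n (r' + k + 1)
          ≤ p * (binTail p n r' * binTail p n k)
            + (1 - p) * (binTail p n (r'+1) * binTail p n k) := by
            gcongr
        _ = (p * binTail p n r' + (1 - p) * binTail p n (r'+1)) * binTail p n k := by ring
        _ ≤ (p * binTail p n r' + (1 - p) * binTail p n (r'+1)) * binTail p (n+1) k := by
            have : 0 ≤ p * binTail p n r' + (1 - p) * binTail p n (r'+1) := by positivity
            exact mul_le_mul_of_nonneg_left hk this

lemma binTail_pos (hp0 : 0 < p) (hp1 : p < 1) {n r : ℕ} (hr : r ≤ n) :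
    0 < binTail p n r := by
  refine Finset.sum_pos' (fun j _ => binPMF_nonneg hp0.le hp1.le n j) ⟨n, ?_, ?_⟩
  · simp [Finset.mem_Icc, hr]
  · simp [binPMF, Nat.choose_self]
    positivity

lemma binom_tail_apply {p : ℝ} (hp0 : 0 ≤ p) (hp1 : p ≤ 1) (n m : ℕ) :
    binomialMeasure n p {j | m ≤ j} = ENNReal.ofReal (binTail p n m) := by
  unfold binomialMeasure
  rw [Measure.sum_apply _ (by trivial)]
  have h1 : ∀ j : ℕ,
      (ENNReal.ofReal ((n.choose j : ℝ) * p ^ j * (1 - p) ^ (n - j)) • Measure.dirac j)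
        {j' | m ≤ j'}
      = if j ∈ Finset.Icc m n then ENNReal.ofReal (binPMF p n j) else 0 := by
    intro j
    rw [Measure.smul_apply, Measure.dirac_apply' _ (by trivial)]
    by_cases hj : m ≤ j
    · by_cases hjn : j ≤ n
      · simp [Set.indicator, hj, hjn, binPMF]
      · simp [Set.indicator, hj, hjn, binPMF, Nat.choose_eq_zero_of_lt (by omega : n < j)]
    · simp [Set.indicator, hj]
  simp_rw [h1]
  rw [tsum_eq_sum (s := Finset.Icc m n) (by intro j hj; simp [hj])]
  rw [Finset.sum_ite_of_true (fun j hj => hj)]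
  rw [binTail, ENNReal.ofReal_sum_of_nonneg (fun j _ => binPMF_nonneg hp0 hp1 n j)]

/-- If `ξ ~ Bin(n,p)` and `0 ≤ r ≤ n`, the conditional distribution of `ξ - r`
given `ξ ≥ r` is stochastically dominated by Bin(n,p). -/
theorem binomial_conditional_dominated {Ω : Type*} [MeasurableSpace Ω] (μ : Measure Ω)
    [IsProbabilityMeasure μ] (n : ℕ) (hn : 0 < n) (p : ℝ) (hp0 : 0 < p) (hp1 : p < 1)
    (ξ : Ω → ℕ) (hmeas : Measurable ξ) (hdist : μ.map ξ = binomialMeasure n p)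
    (r : ℕ) (hr : r ≤ n) (k : ℕ) :
    (μ[|{ω | r ≤ ξ ω}]) {ω | r + k ≤ ξ ω} ≤ binomialMeasure n p {m | k ≤ m} := by
  have hA : MeasurableSet {ω | r ≤ ξ ω} := hmeas (by trivial)
  have hmu : ∀ m : ℕ, μ {ω | m ≤ ξ ω} = ENNReal.ofReal (binTail p n m) := by
    intro m
    have h0 : {ω | m ≤ ξ ω} = ξ ⁻¹' {j | m ≤ j} := rfl
    rw [h0, ← Measure.map_apply hmeas (by trivial), hdist,
      binom_tail_apply hp0.le hp1.le]
  rw [cond_apply hA, Set.inter_eq_self_of_subset_right (fun ω hω => by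
    simp only [Set.mem_setOf_eq] at *; omega),
    binom_tail_apply hp0.le hp1.le, hmu, hmu]
  have hpos : 0 < binTail p n r := binTail_pos hp0 hp1 hr
  rw [← ENNReal.div_eq_inv_mul, ENNReal.div_le_iff (by simp [hpos]) ENNReal.ofReal_ne_top]
  rw [← ENNReal.ofReal_mul (binTail_nonneg hp0.le hp1.le n k)]
  exact ENNReal.ofReal_le_ofReal
    (by rw [mul_comm]; exact binTail_submul hp0.le hp1.le n r k)
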